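/- For γ > 0, lim_{n→∞} (n - ⌊γ√n⌋ + 1)^{⌊γ√n⌋} · (n - ⌊γ√n⌋)! / n! = e^{-γ²/2}. -/

import Mathlib

open Filter Real Finset Topology

private lemma exp_neg_le_inv (x : ℝ) (hx : 0 ≤ x) : Real.exp (-x) ≤ 1 / (1 + x) := by
  have h1 : (0:ℝ) < 1 + x := by linarith
  have h2 : 1 + x ≤ Real.exp x := by
    have := Real.add_one_le_exp x; linarith
  rw [Real.exp_neg, one_div]
  exact inv_anti₀ h1 h2

private lemma inv_le_exp (x : ℝ) (hx : 0 ≤ x) : 1 / (1 + x) ≤ Real.exp (x ^ 2 - x) := by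
  have h1 : (0:ℝ) < 1 + x := by linarith
  have hlog : Real.log ((1 + x)⁻¹) ≤ (1 + x)⁻¹ - 1 :=
    Real.log_le_sub_one_of_pos (by positivity)
  rw [Real.log_inv] at hlog
  have hfrac : x - x ^ 2 ≤ 1 - (1 + x)⁻¹ := by
    rw [← sub_nonneg]
    have : 1 - (1 + x)⁻¹ - (x - x ^ 2) = x ^ 3 / (1 + x) := by
      field_simp; ring
    rw [this]; positivity
  have hlb : x - x ^ 2 ≤ Real.log (1 + x) := by linarith
  have hexp : Real.exp (x - x ^ 2) ≤ 1 + x := by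
    calc Real.exp (x - x ^ 2) ≤ Real.exp (Real.log (1 + x)) := Real.exp_le_exp.2 hlb
    _ = 1 + x := Real.exp_log h1
  rw [div_le_iff₀ h1]
  calc (1:ℝ) = Real.exp (x ^ 2 - x) * Real.exp (x - x ^ 2) := by
        rw [← Real.exp_add]; simp
  _ ≤ Real.exp (x ^ 2 - x) * (1 + x) :=
        mul_le_mul_of_nonneg_left hexp (Real.exp_pos _).le

private lemma fact_add_eq (m k : ℕ) :
    (m + k).factorial = m.factorial * ∏ i ∈ range k, (m + 1 + i) := by
  induction k with
  | zero => simp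
  | succ k ih =>
    rw [prod_range_succ, ← mul_assoc, ← ih, show m + (k+1) = (m + k) + 1 from rfl,
      Nat.factorial_succ]
    ring

private lemma sum_range_cast (k : ℕ) :
    (∑ i ∈ range k, (i : ℝ)) = k * (k - 1) / 2 := by
  induction k with
  | zero => simp
  | succ k ih => rw [sum_range_succ, ih]; push_cast; ring

private lemma sqrtn_atTop : Tendsto (fun n : ℕ => Real.sqrt n) atTop atTop := by
  apply tendsto_atTop_atTop.2
  intro b
  refine ⟨⌈b ^ 2⌉₊, fun n hn => ?_⟩
  apply Real.le_sqrt_of_sq_le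
  calc b ^ 2 ≤ (⌈b ^ 2⌉₊ : ℝ) := Nat.le_ceil _
  _ ≤ n := Nat.cast_le.2 hn


private lemma expr_eq_prod (n k : ℕ) (hkn : k ≤ n) :
    ((n : ℝ) - (k : ℝ) + 1) ^ k * (Nat.factorial (n - k) : ℝ) / (Nat.factorial n : ℝ)
      = ∏ i ∈ range k, ((((n - k : ℕ) : ℝ) + 1) / (((n - k : ℕ) : ℝ) + 1 + (i : ℝ))) := by
  set m := n - k with hm
  have hn : n = m + k := (Nat.sub_add_cancel hkn).symm
  have hfact : (n.factorial : ℝ) = (m.factorial : ℝ) * ∏ i ∈ range k, ((m : ℝ) + 1 + (i : ℝ)) := by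
    rw [hn, fact_add_eq]; push_cast; ring
  have hcast : (n : ℝ) - (k : ℝ) + 1 = (m : ℝ) + 1 := by rw [hn]; push_cast; ring
  rw [hcast, hfact, Finset.prod_div_distrib, Finset.prod_const, Finset.card_range]
  have hp : 0 < ∏ i ∈ range k, ((m : ℝ) + 1 + (i : ℝ)) :=
    Finset.prod_pos fun i _ => by positivity
  have hf : (0 : ℝ) < (m.factorial : ℝ) := by exact_mod_cast m.factorial_pos
  field_simp

/-- for `γ > 0`,
`(n - ⌊γ√n⌋ + 1)^{⌊γ√n⌋} · (n - ⌊γ√n⌋)! / n! → e^{-γ²/2}` as `n → ∞`. -/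
theorem limit_exp_neg_gamma_sq_half (γ : ℝ) (hγ : 0 < γ) :
    Tendsto
      (fun n : ℕ =>
        ((n : ℝ) - (Nat.floor (γ * Real.sqrt n) : ℝ) + 1) ^ (Nat.floor (γ * Real.sqrt n)) *
          (Nat.factorial (n - Nat.floor (γ * Real.sqrt n)) : ℝ) / (Nat.factorial n : ℝ))
      atTop (nhds (Real.exp (-γ ^ 2 / 2))) := by
  set K : ℕ → ℕ := fun n => Nat.floor (γ * Real.sqrt n) with hK
  set mr : ℕ → ℝ := fun n => ((n - K n : ℕ) : ℝ) + 1 with hmrdef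
  have hsqrt_nonneg : ∀ n : ℕ, 0 ≤ Real.sqrt n := fun n => Real.sqrt_nonneg _
  have hK_le : ∀ n : ℕ, (K n : ℝ) ≤ γ * Real.sqrt n := fun n =>
    Nat.floor_le (by positivity)
  have hK_gt : ∀ n : ℕ, γ * Real.sqrt n - 1 < (K n : ℝ) := fun n => by
    have := Nat.lt_floor_add_one (γ * Real.sqrt n); linarith
  have hmr_pos : ∀ n : ℕ, (0 : ℝ) < mr n := fun n => by
    simp only [hmrdef]; positivity
  have hinv : Tendsto (fun n : ℕ => (Real.sqrt n)⁻¹) atTop (𝓝 0) :=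
    sqrtn_atTop.inv_tendsto_atTop
  have hev1 : ∀ᶠ n : ℕ in atTop, 1 ≤ Real.sqrt n := sqrtn_atTop.eventually_ge_atTop 1
  have hevγ : ∀ᶠ n : ℕ in atTop, γ + 1 ≤ Real.sqrt n := sqrtn_atTop.eventually_ge_atTop _
  -- K n / √n → γ
  have hq : Tendsto (fun n : ℕ => (K n : ℝ) / Real.sqrt n) atTop (𝓝 γ) := by
    apply tendsto_of_tendsto_of_tendsto_of_le_of_le'
      (g := fun n : ℕ => γ - (Real.sqrt n)⁻¹) (h := fun _ : ℕ => γ)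
    · simpa using tendsto_const_nhds.sub hinv
    · exact tendsto_const_nhds
    · filter_upwards [hev1] with n hn
      have hs : (0 : ℝ) < Real.sqrt n := lt_of_lt_of_le one_pos hn
      have heq : γ - (Real.sqrt n)⁻¹ = (γ * Real.sqrt n - 1) / Real.sqrt n := by
        field_simp
      rw [heq]
      gcongr
      exact (hK_gt n).le
    · filter_upwards [hev1] with n hn
      have hs : (0 : ℝ) < Real.sqrt n := lt_of_lt_of_le one_pos hn
      rw [div_le_iff₀ hs]
      exact hK_le n
  -- eventually K n < n
  have hKn : ∀ᶠ n : ℕ in atTop, K n < n := by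
    filter_upwards [hevγ, hev1] with n h1n h2n
    have hs2 : Real.sqrt n * Real.sqrt n = (n : ℝ) := Real.mul_self_sqrt (Nat.cast_nonneg n)
    have hlt : (K n : ℝ) < (n : ℝ) := by
      have h3 := hK_le n
      nlinarith [mul_nonneg (by linarith : (0:ℝ) ≤ Real.sqrt n - 1 - γ) (hsqrt_nonneg n)]
    exact_mod_cast hlt
  have hevn1 : ∀ᶠ n : ℕ in atTop, 1 ≤ n := eventually_ge_atTop 1
  have hmr_cast : ∀ᶠ n : ℕ in atTop, mr n = (n : ℝ) - (K n : ℝ) + 1 := by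
    filter_upwards [hKn] with n hn
    simp only [hmrdef]
    rw [Nat.cast_sub hn.le]
  -- mr n / n → 1
  have hmrn : Tendsto (fun n : ℕ => mr n / (n : ℝ)) atTop (𝓝 1) := by
    have hlim : Tendsto
        (fun n : ℕ => 1 - ((K n : ℝ) / Real.sqrt n) * (Real.sqrt n)⁻¹ + ((n : ℝ))⁻¹)
        atTop (𝓝 1) := by
      have h0 : Tendsto (fun n : ℕ => ((n : ℝ))⁻¹) atTop (𝓝 0) :=
        tendsto_inv_atTop_zero.comp tendsto_natCast_atTop_atTop
      have := (((tendsto_const_nhds (x := (1:ℝ))).sub (hq.mul hinv))).add h0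
      simpa using this
    apply hlim.congr'
    filter_upwards [hmr_cast, hevn1] with n hn hn1
    have hn0 : (0 : ℝ) < (n : ℝ) := by exact_mod_cast hn1
    have hs : (0 : ℝ) < Real.sqrt n := Real.sqrt_pos.2 hn0
    have hs2 : Real.sqrt n * Real.sqrt n = (n : ℝ) := Real.mul_self_sqrt (Nat.cast_nonneg n)
    rw [hn]
    field_simp
    rw [Real.sq_sqrt hn0.le]; ring
  -- n / mr n → 1
  have hnmr : Tendsto (fun n : ℕ => (n : ℝ) / mr n) atTop (𝓝 1) := by
    have h := hmrn.inv₀ one_ne_zero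
    simp only [inv_div, inv_one] at h
    exact h
  -- the sum S
  set S : ℕ → ℝ := fun n => (K n : ℝ) * ((K n : ℝ) - 1) / 2 / mr n with hSdef
  have hS : Tendsto S atTop (𝓝 (γ ^ 2 / 2)) := by
    have hlim : Tendsto
        (fun n : ℕ => ((K n : ℝ) / Real.sqrt n) * ((K n : ℝ) / Real.sqrt n - (Real.sqrt n)⁻¹)
          / (2 * (mr n / (n : ℝ)))) atTop (𝓝 (γ * (γ - 0) / (2 * 1))) := by
      exact ((hq.mul (hq.sub hinv)).div
        (((tendsto_const_nhds (x := (2:ℝ))).mul hmrn)) (by norm_num))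
    have : γ * (γ - 0) / (2 * 1) = γ ^ 2 / 2 := by ring
    rw [this] at hlim
    apply hlim.congr'
    filter_upwards [hevn1] with n hn1
    have hn0 : (0 : ℝ) < (n : ℝ) := by exact_mod_cast hn1
    have hs : (0 : ℝ) < Real.sqrt n := Real.sqrt_pos.2 hn0
    have hs2 : Real.sqrt n * Real.sqrt n = (n : ℝ) := Real.mul_self_sqrt (Nat.cast_nonneg n)
    have hm := hmr_pos n
    simp only [hSdef]
    rw [← hs2]
    field_simp
    rw [Real.sqrt_sq hs.le]
  -- the error E
  set E : ℕ → ℝ := fun n => (K n : ℝ) ^ 3 / (mr n) ^ 2 with hEdef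
  have hE : Tendsto E atTop (𝓝 0) := by
    have hlim : Tendsto
        (fun n : ℕ => ((K n : ℝ) / Real.sqrt n) ^ 3 * ((n : ℝ) / mr n) ^ 2 * (Real.sqrt n)⁻¹)
        atTop (𝓝 (γ ^ 3 * 1 ^ 2 * 0)) :=
      ((hq.pow 3).mul (hnmr.pow 2)).mul hinv
    have : γ ^ 3 * 1 ^ 2 * 0 = (0 : ℝ) := by ring
    rw [this] at hlim
    apply hlim.congr'
    filter_upwards [hevn1] with n hn1
    have hn0 : (0 : ℝ) < (n : ℝ) := by exact_mod_cast hn1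
    have hs : (0 : ℝ) < Real.sqrt n := Real.sqrt_pos.2 hn0
    have hs2 : Real.sqrt n * Real.sqrt n = (n : ℝ) := Real.mul_self_sqrt (Nat.cast_nonneg n)
    have hm := hmr_pos n
    simp only [hEdef]
    field_simp
    rw [show Real.sqrt n ^ 4 = (n : ℝ) ^ 2 by
      rw [show (4 : ℕ) = 2 * 2 from rfl, pow_mul, Real.sq_sqrt hn0.le]]
  -- rewrite the target
  have htarget : (-γ ^ 2 / 2 : ℝ) = -(γ ^ 2 / 2) := by ring
  rw [htarget]
  -- squeeze
  apply tendsto_of_tendsto_of_tendsto_of_le_of_le'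
    (g := fun n : ℕ => Real.exp (-(S n))) (h := fun n : ℕ => Real.exp (E n - S n))
  · exact (Real.continuous_exp.tendsto _).comp hS.neg
  · have : Real.exp (-(γ ^ 2 / 2)) = Real.exp (0 - γ ^ 2 / 2) := by ring_nf
    rw [this]
    exact (Real.continuous_exp.tendsto _).comp (hE.sub hS)
  · -- lower bound
    filter_upwards [hKn] with n hn
    rw [expr_eq_prod n (K n) hn.le]
    have hm := hmr_pos n
    have hfac : ∀ i : ℕ, (((n - K n : ℕ) : ℝ) + 1) / (((n - K n : ℕ) : ℝ) + 1 + (i : ℝ))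
        = 1 / (1 + (i : ℝ) / mr n) := fun i => by
      have h1 : (((n - K n : ℕ) : ℝ) + 1) ≠ 0 := by positivity
      simp only [hmrdef]
      rw [show 1 + (i : ℝ) / (((n - K n : ℕ) : ℝ) + 1)
          = ((((n - K n : ℕ) : ℝ) + 1 + (i : ℝ)) / (((n - K n : ℕ) : ℝ) + 1)) from by
        field_simp, one_div_div]
    calc Real.exp (-(S n))
        = ∏ i ∈ range (K n), Real.exp (-((i : ℝ) / mr n)) := by
          rw [← Real.exp_sum]
          congr 1
          simp only [Finset.sum_neg_distrib, ← Finset.sum_div, sum_range_cast, hSdef]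
      _ ≤ ∏ i ∈ range (K n), ((((n - K n : ℕ) : ℝ) + 1) / (((n - K n : ℕ) : ℝ) + 1 + (i : ℝ))) := by
          apply Finset.prod_le_prod (fun i _ => (Real.exp_pos _).le)
          intro i _
          rw [hfac i]
          exact exp_neg_le_inv _ (by positivity)
  · -- upper bound
    filter_upwards [hKn] with n hn
    rw [expr_eq_prod n (K n) hn.le]
    have hm := hmr_pos n
    have hfac : ∀ i : ℕ, (((n - K n : ℕ) : ℝ) + 1) / (((n - K n : ℕ) : ℝ) + 1 + (i : ℝ))
        = 1 / (1 + (i : ℝ) / mr n) := fun i => by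
      have h1 : (((n - K n : ℕ) : ℝ) + 1) ≠ 0 := by positivity
      simp only [hmrdef]
      rw [show 1 + (i : ℝ) / (((n - K n : ℕ) : ℝ) + 1)
          = ((((n - K n : ℕ) : ℝ) + 1 + (i : ℝ)) / (((n - K n : ℕ) : ℝ) + 1)) from by
        field_simp, one_div_div]
    calc ∏ i ∈ range (K n), ((((n - K n : ℕ) : ℝ) + 1) / (((n - K n : ℕ) : ℝ) + 1 + (i : ℝ)))
        ≤ ∏ i ∈ range (K n), Real.exp (((i : ℝ) / mr n) ^ 2 - (i : ℝ) / mr n) := by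
          apply Finset.prod_le_prod
          · intro i _; positivity
          · intro i _
            rw [hfac i]
            exact inv_le_exp _ (by positivity)
      _ = Real.exp (∑ i ∈ range (K n), (((i : ℝ) / mr n) ^ 2 - (i : ℝ) / mr n)) :=
          (Real.exp_sum _ _).symm
      _ ≤ Real.exp (E n - S n) := by
          apply Real.exp_le_exp.2
          rw [Finset.sum_sub_distrib]
          have hsum1 : ∑ i ∈ range (K n), (i : ℝ) / mr n = S n := by
            rw [← Finset.sum_div, sum_range_cast, hSdef]
          have hsum2 : ∑ i ∈ range (K n), ((i : ℝ) / mr n) ^ 2 ≤ E n := by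
            calc ∑ i ∈ range (K n), ((i : ℝ) / mr n) ^ 2
                ≤ ∑ _i ∈ range (K n), ((K n : ℝ) / mr n) ^ 2 := by
                  apply Finset.sum_le_sum
                  intro i hi
                  have hik : (i : ℝ) ≤ (K n : ℝ) := by
                    exact_mod_cast (Finset.mem_range.1 hi).le
                  gcongr
              _ = (K n : ℝ) * ((K n : ℝ) / mr n) ^ 2 := by
                  rw [Finset.sum_const, Finset.card_range, nsmul_eq_mul]
              _ = E n := by
                  simp only [hEdef]
                  field_simp
          linarith
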